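/- Let n ≥ 2 be an integer and let A = (a_{ij}) ∈ Δ_n^2. Then a_{1,1} = a_{1,2} = a_{2,1} = 1, a_{i,1} = 0 for 3 ≤ i ≤ n, and a_{1,j} = 0 for 3 ≤ j ≤ n. -/

import Mathlib

/-- The integer encoded (in binary, most significant digit first) by the `i`-th row
of the binary matrix `A`, i.e. `x_i = ∑_j a_{ij} 2^{m-j}` (1-indexed). -/
def rowVal {n m : ℕ} (A : Fin n → Fin m → Fin 2) (i : Fin n) : ℕ :=
  ∑ j : Fin m, (A i j : ℕ) * 2 ^ (m - 1 - (j : ℕ))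

/-- The integer encoded by the `j`-th column of `A`, i.e. `y_j = ∑_i a_{ij} 2^{n-i}`. -/
def colVal {n m : ℕ} (A : Fin n → Fin m → Fin 2) (j : Fin m) : ℕ :=
  ∑ i : Fin n, (A i j : ℕ) * 2 ^ (n - 1 - (i : ℕ))

/-- `A ∈ 𝔠_{n×m}`: rows and columns sorted in lexicographically nondecreasing order. -/
def memC {n m : ℕ} (A : Fin n → Fin m → Fin 2) : Prop :=
  Monotone (rowVal A) ∧ Monotone (colVal A)

/-- `A ∈ 𝔡_{n×m}`: rows and columns sorted in lexicographically nonincreasing order. -/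
def memD {n m : ℕ} (A : Fin n → Fin m → Fin 2) : Prop :=
  Antitone (rowVal A) ∧ Antitone (colVal A)

/-- `Λ_n^k`: n×n binary matrices with exactly `k` ones in each row and each column. -/
def lambdaSet (n k : ℕ) : Set (Fin n → Fin n → Fin 2) :=
  {A | (∀ i, ∑ j, (A i j : ℕ) = k) ∧ (∀ j, ∑ i, (A i j : ℕ) = k)}

/-- `Γ_n^k = 𝔠_{n×n} ∩ Λ_n^k`. -/
def GammaSet (n k : ℕ) : Set (Fin n → Fin n → Fin 2) :=
  {A | memC A} ∩ lambdaSet n k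

/-- `Δ_n^k = 𝔡_{n×n} ∩ Λ_n^k`. -/
def DeltaSet (n k : ℕ) : Set (Fin n → Fin n → Fin 2) :=
  {A | memD A} ∩ lambdaSet n k

/-- `γ(n,k) = |Γ_n^k|`. -/
noncomputable def gammaCard (n k : ℕ) : ℕ := (GammaSet n k).ncard

/-- `δ(n,k) = |Δ_n^k|`. -/
noncomputable def deltaCard (n k : ℕ) : ℕ := (DeltaSet n k).ncard

lemma sum_pow_total (n : ℕ) : ∑ i : Fin n, 2 ^ (n - 1 - (i : ℕ)) = 2 ^ n - 1 := by
  have h := Fin.sum_univ_eq_sum_range (fun k => 2 ^ (n - 1 - k)) n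
  rw [h, Finset.sum_range_reflect]
  simpa using Nat.geomSum_eq (le_refl 2) n

lemma fin2_cases (a : Fin 2) : a = 0 ∨ a = 1 := by fin_cases a <;> simp

lemma vec_ge {n : ℕ} (x : Fin n → Fin 2) (i : Fin n) (h : x i = 1) :
    2 ^ (n - 1 - (i : ℕ)) ≤ ∑ k : Fin n, (x k : ℕ) * 2 ^ (n - 1 - (k : ℕ)) := by
  have : (x i : ℕ) * 2 ^ (n - 1 - (i : ℕ)) = 2 ^ (n - 1 - (i : ℕ)) := by rw [h]; simp
  calc 2 ^ (n - 1 - (i : ℕ)) = (x i : ℕ) * 2 ^ (n - 1 - (i : ℕ)) := this.symm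
    _ ≤ _ := Finset.single_le_sum (f := fun k => (x k : ℕ) * 2 ^ (n - 1 - (k : ℕ)))
        (fun k _ => Nat.zero_le _) (Finset.mem_univ i)

lemma vec_lt {n : ℕ} (hn : 0 < n) (x : Fin n → Fin 2) (h : x ⟨0, hn⟩ = 0) :
    ∑ k : Fin n, (x k : ℕ) * 2 ^ (n - 1 - (k : ℕ)) < 2 ^ (n - 1) := by
  have h0 : ((x ⟨0, hn⟩ : ℕ) * 2 ^ (n - 1 - 0)) = 0 := by rw [h]; simp
  have he : ∑ k ∈ (Finset.univ : Finset (Fin n)).erase ⟨0, hn⟩, (x k : ℕ) * 2 ^ (n - 1 - (k : ℕ))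
      = ∑ k : Fin n, (x k : ℕ) * 2 ^ (n - 1 - (k : ℕ)) :=
    Finset.sum_erase _ (by simpa using h0)
  rw [← he]
  have hb : ∑ k ∈ (Finset.univ : Finset (Fin n)).erase ⟨0, hn⟩, (x k : ℕ) * 2 ^ (n - 1 - (k : ℕ))
      ≤ ∑ k ∈ (Finset.univ : Finset (Fin n)).erase ⟨0, hn⟩, 2 ^ (n - 1 - (k : ℕ)) := by
    apply Finset.sum_le_sum
    intro k _
    have : (x k : ℕ) ≤ 1 := Nat.lt_succ_iff.mp (x k).isLt
    calc (x k : ℕ) * 2 ^ (n - 1 - (k : ℕ)) ≤ 1 * 2 ^ (n - 1 - (k : ℕ)) :=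
          Nat.mul_le_mul_right _ this
      _ = _ := one_mul _
  have hadd : 2 ^ (n - 1 - 0) + ∑ k ∈ (Finset.univ : Finset (Fin n)).erase ⟨0, hn⟩, 2 ^ (n - 1 - (k : ℕ))
      = ∑ k : Fin n, 2 ^ (n - 1 - (k : ℕ)) :=
    Finset.add_sum_erase _ (fun k : Fin n => 2 ^ (n - 1 - (k : ℕ))) (Finset.mem_univ ⟨0, hn⟩)
  rw [sum_pow_total] at hadd
  simp only [Nat.sub_zero] at hadd
  have h2 : 2 ^ n = 2 * 2 ^ (n - 1) := by
    rw [← pow_succ']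
    congr 1
    omega
  have hp : 0 < 2 ^ (n - 1) := pow_pos (by norm_num) _
  omega

lemma exists_other_one {n : ℕ} (x : Fin n → Fin 2) (h : ∑ i, (x i : ℕ) = 2)
    (a : Fin n) : ∃ i, i ≠ a ∧ x i = 1 := by
  by_contra hc
  push_neg at hc
  have : ∑ i, (x i : ℕ) ≤ 1 := by
    calc ∑ i, (x i : ℕ) ≤ ∑ i, if i = a then 1 else 0 := by
          apply Finset.sum_le_sum
          intro i _
          by_cases hi : i = a
          · simp [hi]
            exact Nat.lt_succ_iff.mp (x a).isLt
          · simp [hi]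
            rcases fin2_cases (x i) with h0 | h1
            · simp [h0]
            · exact absurd h1 (hc i hi)
      _ = 1 := by simp
  omega

/-- Theorem (0-indexed): if `A ∈ Δ_n^2`, `n ≥ 2`, then `a_{00} = a_{01} = a_{10} = 1` and the
rest of the first row and first column is zero. -/
theorem corner_of_Delta_two (n : ℕ) (hn : 2 ≤ n) (A : Fin n → Fin n → Fin 2)
    (hA : A ∈ DeltaSet n 2) :
    A ⟨0, by omega⟩ ⟨0, by omega⟩ = 1 ∧
    A ⟨0, by omega⟩ ⟨1, by omega⟩ = 1 ∧
    A ⟨1, by omega⟩ ⟨0, by omega⟩ = 1 ∧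
    (∀ i : Fin n, 2 ≤ (i : ℕ) → A i ⟨0, by omega⟩ = 0) ∧
    (∀ j : Fin n, 2 ≤ (j : ℕ) → A ⟨0, by omega⟩ j = 0) := by
  obtain ⟨⟨hr, hc⟩, hrow, hcol⟩ := hA
  have hpos : 0 < n := by omega
  set i0 : Fin n := ⟨0, by omega⟩ with hi0
  set i1 : Fin n := ⟨1, by omega⟩ with hi1
  -- Step 1: A i0 i0 = 1
  have hA00 : A i0 i0 = 1 := by
    rcases fin2_cases (A i0 i0) with h0 | h1
    · exfalso
      obtain ⟨i, _, hione⟩ := exists_other_one (fun k => A k i0) (hcol i0) i0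
      have hge : 2 ^ (n - 1) ≤ rowVal A i := by
        have := vec_ge (A i) i0 hione
        simpa [rowVal, hi0] using this
      have hlt : rowVal A i0 < 2 ^ (n - 1) := by
        have := vec_lt hpos (A i0) h0
        simpa [rowVal] using this
      have hle : rowVal A i ≤ rowVal A i0 := hr (show i0 ≤ i from Fin.le_def.mpr (Nat.zero_le _))
      omega
    · exact h1
  -- Step 2: A i1 i0 = 1
  have hA10 : A i1 i0 = 1 := by
    rcases fin2_cases (A i1 i0) with h0 | h1
    · exfalso
      obtain ⟨i, hine, hione⟩ := exists_other_one (fun k => A k i0) (hcol i0) i0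
      have hge : 2 ^ (n - 1) ≤ rowVal A i := by
        have := vec_ge (A i) i0 hione
        simpa [rowVal, hi0] using this
      have hlt : rowVal A i1 < 2 ^ (n - 1) := by
        have := vec_lt hpos (A i1) h0
        simpa [rowVal] using this
      have hvne : (i : ℕ) ≠ 0 := fun h => hine (Fin.ext h)
      have hle : rowVal A i ≤ rowVal A i1 := hr (by rw [Fin.le_def]; simp [hi1]; omega)
      omega
    · exact h1
  -- Step 3: A i0 i1 = 1
  have hA01 : A i0 i1 = 1 := by
    rcases fin2_cases (A i0 i1) with h0 | h1
    · exfalso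
      obtain ⟨j, hjne, hjone⟩ := exists_other_one (A i0) (hrow i0) i0
      have hge : 2 ^ (n - 1) ≤ colVal A j := by
        have := vec_ge (fun k => A k j) i0 hjone
        simpa [colVal, hi0] using this
      have hlt : colVal A i1 < 2 ^ (n - 1) := by
        have := vec_lt hpos (fun k => A k i1) h0
        simpa [colVal] using this
      have hvne : (j : ℕ) ≠ 0 := fun h => hjne (Fin.ext h)
      have hle : colVal A j ≤ colVal A i1 := hc (by rw [Fin.le_def]; simp [hi1]; omega)
      omega
    · exact h1
  refine ⟨hA00, hA01, hA10, ?_, ?_⟩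
  · intro i hi
    rcases fin2_cases (A i i0) with h0 | h1
    · exact h0
    · exfalso
      have hne01 : i0 ≠ i1 := by simp [hi0, hi1, Fin.ext_iff]
      have hne0i : i0 ≠ i := by simp [hi0, Fin.ext_iff]; omega
      have hne1i : i1 ≠ i := by simp [hi1, Fin.ext_iff]; omega
      have hsub : ∑ k ∈ ({i0, i1, i} : Finset (Fin n)), (A k i0 : ℕ) ≤ ∑ k, (A k i0 : ℕ) :=
        Finset.sum_le_sum_of_subset (Finset.subset_univ _)
      rw [Finset.sum_insert (by simp [hne01, hne0i]),
        Finset.sum_insert (by simp [hne1i]), Finset.sum_singleton,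
        hA00, hA10, h1, hcol i0] at hsub
      simp at hsub
  · intro j hj
    rcases fin2_cases (A i0 j) with h0 | h1
    · exact h0
    · exfalso
      have hne01 : i0 ≠ i1 := by simp [hi0, hi1, Fin.ext_iff]
      have hne0j : i0 ≠ j := by simp [hi0, Fin.ext_iff]; omega
      have hne1j : i1 ≠ j := by simp [hi1, Fin.ext_iff]; omega
      have hsub : ∑ k ∈ ({i0, i1, j} : Finset (Fin n)), (A i0 k : ℕ) ≤ ∑ k, (A i0 k : ℕ) :=
        Finset.sum_le_sum_of_subset (Finset.subset_univ _)
      rw [Finset.sum_insert (by simp [hne01, hne0j]),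
        Finset.sum_insert (by simp [hne1j]), Finset.sum_singleton,
        hA00, hA01, h1, hrow i0] at hsub
      simp at hsub
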